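/- Necessary conditions at redundancy 2: Let M be a positive integer. If there exists a real equiangular tight frame of 2M vectors in ℝ^M, then M is odd and 2M − 1 is a sum of two squares (i.e., there exist integers a, b with 2M − 1 = a² + b²). -/

import Mathlib

open scoped InnerProductSpace

namespace RealETFAux
open Matrix BigOperators Finset

variable {α : Type*} [Fintype α]

/-- Reflection in the hyperplane orthogonal to `u`. -/
def refl (u x : α → ℚ) : α → ℚ := x - (2 * (x ⬝ᵥ u) / (u ⬝ᵥ u)) • u

lemma refl_dot (u : α → ℚ) (hu : u ⬝ᵥ u ≠ 0) (x y : α → ℚ) :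
    refl u x ⬝ᵥ refl u y = x ⬝ᵥ y := by
  unfold refl
  simp only [sub_dotProduct, dotProduct_sub, smul_dotProduct,
    dotProduct_smul, smul_eq_mul]
  rw [dotProduct_comm u y]
  field_simp
  ring

lemma refl_fix (u x : α → ℚ) (h : x ⬝ᵥ u = 0) : refl u x = x := by
  unfold refl; rw [h]; simp

lemma refl_apply_of_half (u x : α → ℚ) (h : x ⬝ᵥ u = (1/2) * (u ⬝ᵥ u)) (hu : u ⬝ᵥ u ≠ 0) :
    refl u x = x - u := by
  unfold refl; rw [h]
  have : 2 * (1 / 2 * u ⬝ᵥ u) / (u ⬝ᵥ u) = 1 := by field_simp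
  rw [this, one_smul]

lemma sendTo {k : ℚ} (hk : k ≠ 0) (v w : α → ℚ) (hv : v ⬝ᵥ v = k) (hw : w ⬝ᵥ w = k) :
    ∃ f : (α → ℚ) → (α → ℚ), (∀ x y, f x ⬝ᵥ f y = x ⬝ᵥ y) ∧ f v = w ∧
      ∀ x, x ⬝ᵥ v = 0 → x ⬝ᵥ w = 0 → f x = x := by
  have hvw : v ⬝ᵥ w = w ⬝ᵥ v := dotProduct_comm _ _
  have hmm : (v - w) ⬝ᵥ (v - w) + (v + w) ⬝ᵥ (v + w) = 4 * k := by
    simp only [dotProduct_sub, sub_dotProduct, dotProduct_add,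
      add_dotProduct, hv, hw, hvw]
    ring
  by_cases hd : (v - w) ⬝ᵥ (v - w) = 0
  · -- use two reflections, in v+w then in w
    have hne : (v + w) ⬝ᵥ (v + w) ≠ 0 := by
      intro h0; rw [hd, h0] at hmm; simp at hmm; exact hk hmm
    have hwne : w ⬝ᵥ w ≠ 0 := by rw [hw]; exact hk
    refine ⟨fun x => refl w (refl (v + w) x), fun x y => by
      rw [refl_dot w hwne, refl_dot (v+w) hne], ?_, fun x hxv hxw => ?_⟩
    · show refl w (refl (v + w) v) = w
      have h1 : refl (v + w) v = v - (v + w) := by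
        apply refl_apply_of_half _ _ _ hne
        simp only [dotProduct_add, add_dotProduct, hv, hw, hvw]
        ring
      rw [h1]
      have h2 : v - (v + w) = -w := by funext a; simp
      rw [h2]
      unfold refl
      have h3 : (-w) ⬝ᵥ w = -(w ⬝ᵥ w) := by simp
      rw [h3, hw]
      have h4 : 2 * (-k) / k = -2 := by field_simp
      rw [h4]
      funext a; simp; ring
    · show refl w (refl (v + w) x) = x
      have e1 : x ⬝ᵥ (v + w) = 0 := by rw [dotProduct_add, hxv, hxw]; ring
      rw [refl_fix _ _ e1, refl_fix _ _ hxw]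
  · refine ⟨refl (v - w), fun x y => refl_dot _ hd x y, ?_, fun x hxv hxw => ?_⟩
    · have h1 : refl (v - w) v = v - (v - w) := by
        apply refl_apply_of_half _ _ _ hd
        simp only [dotProduct_sub, sub_dotProduct, hv, hw, hvw]
        ring
      rw [h1]; funext a; simp
    · exact refl_fix _ _ (by simp [dotProduct_sub, hxv, hxw])

def IsOrthFam {ι : Type*} [DecidableEq ι] (k : ℚ) (g : ι → α → ℚ) : Prop :=
  ∀ i j, g i ⬝ᵥ g j = if i = j then k else 0

lemma moveFam {k : ℚ} (hk : k ≠ 0) (q : ℕ) :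
    ∀ {m : ℕ} (g : Fin m → α → ℚ), IsOrthFam k g →
    ∀ (s : Fin q → α → ℚ), IsOrthFam k s →
    ∀ (e : Fin q → Fin m), Function.Injective e →
    ∃ g' : Fin m → α → ℚ, IsOrthFam k g' ∧ ∀ t, g' (e t) = s t := by
  induction q with
  | zero => exact fun g hg s _ e _ => ⟨g, hg, fun t => t.elim0⟩
  | succ q ih =>
    intro m g hg s hs e he
    obtain ⟨g₁, hg₁, hfix⟩ := ih g hg (fun t => s t.castSucc)
      (fun i j => by rw [hs]; simp [Fin.castSucc_inj])
      (fun t => e t.castSucc) (fun a b hab => by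
        simpa [Fin.castSucc_inj] using he hab)
    set v := g₁ (e (Fin.last q)) with hv
    set w := s (Fin.last q) with hw
    have hvv : v ⬝ᵥ v = k := by rw [hg₁]; simp
    have hww : w ⬝ᵥ w = k := by rw [hs]; simp
    obtain ⟨f, hf, hfv, hfid⟩ := sendTo hk v w hvv hww
    refine ⟨fun i => f (g₁ i), fun i j => by rw [hf, hg₁], fun t => ?_⟩
    induction t using Fin.lastCases with
    | last => exact hfv
    | cast t' =>
      show f (g₁ (e t'.castSucc)) = s t'.castSucc
      rw [hfix t']
      apply hfid
      · rw [← hfix t', hg₁]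
        have : e t'.castSucc ≠ e (Fin.last q) := fun hc =>
          (Fin.castSucc_lt_last t').ne (he hc)
        simp [this]
      · rw [hs]
        have : t'.castSucc ≠ Fin.last q := (Fin.castSucc_lt_last t').ne
        simp [this]

lemma quatFam {k a b c d : ℚ} (h : k = a^2 + b^2 + c^2 + d^2) :
    ∃ Q : Fin 4 → Fin 4 → ℚ, IsOrthFam k Q := by
  refine ⟨![![a,b,c,d], ![-b,a,-d,c], ![-c,d,a,-b], ![-d,-c,b,a]], ?_⟩
  subst h
  intro i j
  fin_cases i <;> fin_cases j <;>
    simp [dotProduct, Fin.sum_univ_four] <;> ring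

lemma quatKill {k : ℚ} (hk : k ≠ 0) (Q : Fin 4 → Fin 4 → ℚ) (hQ : IsOrthFam k Q)
    (x : Fin 4 → ℚ) (hx : ∀ t, x ⬝ᵥ Q t = 0) : x = 0 := by
  set Qm : Matrix (Fin 4) (Fin 4) ℚ := Matrix.of Q with hQm
  have h1 : Qm * Qmᵀ = k • 1 := by
    ext i j
    have hij := hQ i j
    simp only [dotProduct] at hij
    rw [Matrix.mul_apply]
    simp only [Matrix.transpose_apply, hQm, Matrix.of_apply]
    rw [hij]
    simp [Matrix.one_apply]
  have h2 : Qm * (k⁻¹ • Qmᵀ) = 1 := by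
    rw [Matrix.mul_smul, h1, smul_smul, inv_mul_cancel₀ hk, one_smul]
  have h3 : (k⁻¹ • Qmᵀ) * Qm = 1 := mul_eq_one_comm.mp h2
  have h4 : Qm *ᵥ x = 0 := by
    funext t
    have hxt := hx t
    simp only [dotProduct] at hxt
    show (∑ i, Qm t i * x i) = 0
    rw [← hxt]
    exact Finset.sum_congr rfl fun i _ => mul_comm _ _
  calc x = 1 *ᵥ x := (Matrix.one_mulVec x).symm
    _ = ((k⁻¹ • Qmᵀ) * Qm) *ᵥ x := by rw [h3]
    _ = (k⁻¹ • Qmᵀ) *ᵥ (Qm *ᵥ x) := by rw [Matrix.mulVec_mulVec]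
    _ = 0 := by rw [h4, Matrix.mulVec_zero]

lemma dot_sum_elim {m : ℕ} (a c : Fin m → ℚ) (b d : Fin 4 → ℚ) :
    (Sum.elim a b : Fin m ⊕ Fin 4 → ℚ) ⬝ᵥ Sum.elim c d = a ⬝ᵥ c + b ⬝ᵥ d := by
  simp [dotProduct, Fintype.sum_sum_type]

lemma descend {k : ℚ} (hk : k ≠ 0) {a b c d : ℚ} (h4 : k = a^2 + b^2 + c^2 + d^2) (n : ℕ)
    (h : ∃ g : Fin (n+4) → Fin (n+4) → ℚ, IsOrthFam k g) :
    ∃ g : Fin n → Fin n → ℚ, IsOrthFam k g := by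
  obtain ⟨g, hg⟩ := h
  set E := finSumFinEquiv (m := n) (n := 4) with hE
  -- transport coordinates
  set g₀ : Fin (n+4) → (Fin n ⊕ Fin 4 → ℚ) := fun i => g i ∘ E with hg₀
  have hg₀fam : IsOrthFam k g₀ := by
    intro i j
    rw [← hg i j]
    simp only [dotProduct, hg₀, Function.comp]
    exact Equiv.sum_comp E fun y => g i y * g j y
  obtain ⟨Q, hQ⟩ := quatFam h4
  set s : Fin 4 → (Fin n ⊕ Fin 4 → ℚ) := fun t => Sum.elim 0 (Q t) with hs
  have hsfam : IsOrthFam k s := by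
    intro i j
    rw [hs]
    simp only
    rw [dot_sum_elim]
    simp [hQ i j]
  obtain ⟨g', hg', hge⟩ := moveFam hk 4 g₀ hg₀fam s hsfam
    (fun t => E (Sum.inr t)) (fun x y hxy => by
      simpa using E.injective hxy)
  -- the inr-coordinates of the other vectors vanish
  have hzero : ∀ i : Fin n, (fun t => g' (E (Sum.inl i)) (Sum.inr t)) = 0 := by
    intro i
    apply quatKill hk Q hQ
    intro t
    have hne : E (Sum.inl i) ≠ E (Sum.inr t) := by
      simp
    have := hg' (E (Sum.inl i)) (E (Sum.inr t))
    rw [if_neg hne, hge t] at this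
    have hdot : g' (E (Sum.inl i)) ⬝ᵥ s t =
        (g' (E (Sum.inl i)) ∘ Sum.inl) ⬝ᵥ (0 : Fin n → ℚ) +
        (g' (E (Sum.inl i)) ∘ Sum.inr) ⬝ᵥ Q t := by
      rw [hs]
      simp only
      rw [← dot_sum_elim]
      congr 1
      · funext x; cases x <;> rfl
    rw [hdot] at this
    simp only [dotProduct_zero, zero_add] at this
    exact this
  -- restrict to the first n coordinates
  refine ⟨fun i => (g' (E (Sum.inl i))) ∘ Sum.inl, fun i j => ?_⟩
  have hsplit : g' (E (Sum.inl i)) ⬝ᵥ g' (E (Sum.inl j)) =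
      (g' (E (Sum.inl i)) ∘ Sum.inl) ⬝ᵥ (g' (E (Sum.inl j)) ∘ Sum.inl) +
      (fun t => g' (E (Sum.inl i)) (Sum.inr t)) ⬝ᵥ (fun t => g' (E (Sum.inl j)) (Sum.inr t)) := by
    rw [← dot_sum_elim]
    congr 1 <;> funext x <;> cases x <;> rfl
  have h2 := hg' (E (Sum.inl i)) (E (Sum.inl j))
  rw [hsplit, hzero i] at h2
  simp only [zero_dotProduct, add_zero] at h2
  rw [h2]
  by_cases hij : i = j
  · simp [hij]
  · rw [if_neg hij, if_neg (by simpa using hij)]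

lemma descend_iter {k : ℚ} (hk : k ≠ 0) {a b c d : ℚ} (h4 : k = a^2 + b^2 + c^2 + d^2) :
    ∀ (j n : ℕ), (∃ g : Fin (4*j+n) → Fin (4*j+n) → ℚ, IsOrthFam k g) →
      ∃ g : Fin n → Fin n → ℚ, IsOrthFam k g := by
  intro j
  induction j with
  | zero =>
    intro n h
    have e : 4*0+n = n := by ring
    rw [e] at h; exact h
  | succ j ih =>
    intro n h
    have e : 4*(j+1)+n = 4*j+(n+4) := by ring
    rw [e] at h
    exact descend hk h4 n (ih (n+4) h)

lemma two_sq_of_fam {k : ℚ} (hk : k ≠ 0) {a b c d : ℚ} (h4 : k = a^2 + b^2 + c^2 + d^2)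
    {j : ℕ} (h : ∃ g : Fin (4*j+2) → Fin (4*j+2) → ℚ, IsOrthFam k g) :
    ∃ x y : ℚ, k = x^2 + y^2 := by
  obtain ⟨g, hg⟩ := descend_iter hk h4 j 2 h
  have := hg 0 0
  rw [if_pos rfl] at this
  refine ⟨g 0 0, g 0 1, ?_⟩
  rw [← this]
  simp [dotProduct, Fin.sum_univ_two]
  ring

lemma nat_two_sq {m : ℕ} (hm : m ≠ 0) (h : ∃ x y : ℚ, (m : ℚ) = x^2 + y^2) :
    ∃ a b : ℕ, m = a^2 + b^2 := by
  obtain ⟨x, y, hxy⟩ := h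
  -- clear denominators
  set a : ℤ := x.num * y.den with ha
  set b : ℤ := y.num * x.den with hb
  set e : ℤ := (x.den : ℤ) * y.den with he
  have hed : e ≠ 0 := by
    simp [he, x.den_nz, y.den_nz]
  have key : (m : ℤ) * e^2 = a^2 + b^2 := by
    have : ((m : ℤ) * e^2 : ℚ) = ((a^2 + b^2 : ℤ) : ℚ) := by
      push_cast [ha, hb, he]
      rw [hxy]
      have hx : (x.num : ℚ) = x * x.den :=
        (div_eq_iff (by exact_mod_cast x.den_nz : ((x.den : ℚ)) ≠ 0)).mp (Rat.num_div_den x)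
      have hy : (y.num : ℚ) = y * y.den :=
        (div_eq_iff (by exact_mod_cast y.den_nz : ((y.den : ℚ)) ≠ 0)).mp (Rat.num_div_den y)
      rw [hx, hy]
      ring
    exact_mod_cast this
  -- pass to natural numbers
  have keyN : m * e.natAbs^2 = a.natAbs^2 + b.natAbs^2 := by
    have := congrArg Int.natAbs key
    rw [Int.natAbs_add_of_nonneg (sq_nonneg a) (sq_nonneg b)] at this
    rw [Int.natAbs_mul] at this
    simpa [Int.natAbs_pow, Int.natAbs_natCast] using this
  have hEv : ∀ {q : ℕ}, q.Prime → q % 4 = 3 → Even (padicValNat q m) := by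
    intro q hq hq3
    have h1 : ∃ u v : ℕ, m * e.natAbs^2 = u^2 + v^2 := ⟨_, _, keyN⟩
    have h2 : Even (padicValNat q (m * e.natAbs^2)) := by
      by_cases hd : q ∣ m * e.natAbs^2
      · exact Nat.eq_sq_add_sq_iff.mp h1 q (Nat.mem_primeFactors.mpr ⟨hq, hd, mul_ne_zero hm (pow_ne_zero 2 (Int.natAbs_ne_zero.mpr hed))⟩) hq3
      · rw [padicValNat.eq_zero_of_not_dvd hd]; exact Even.zero
    haveI : Fact q.Prime := ⟨hq⟩
    have hea : e.natAbs ≠ 0 := Int.natAbs_ne_zero.mpr hed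
    rw [padicValNat.mul hm (pow_ne_zero 2 hea), padicValNat.pow e.natAbs 2] at h2
    rcases h2 with ⟨t, ht⟩
    exact ⟨t - padicValNat q e.natAbs, by omega⟩
  exact Nat.eq_sq_add_sq_iff.mpr fun q hq => hEv (Nat.prime_of_mem_primeFactors hq)

lemma odd_of_seidel {M : ℕ} (hM : 2 ≤ M) (S : Fin (2*M) → Fin (2*M) → ℤ)
    (hsym : ∀ i j, S i j = S j i) (hdiag : ∀ i, S i i = 0)
    (hpm : ∀ i j, i ≠ j → S i j = 1 ∨ S i j = -1)
    (horth : ∀ i j, i ≠ j → ∑ k, S i k * S j k = 0) : Odd M := by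
  have h4n : 4 ≤ 2*M := by omega
  set i0 : Fin (2*M) := ⟨0, by omega⟩ with hi0
  set i1 : Fin (2*M) := ⟨1, by omega⟩ with hi1
  set i2 : Fin (2*M) := ⟨2, by omega⟩ with hi2
  have h01 : i0 ≠ i1 := by simp [hi0, hi1, Fin.ext_iff]
  have h02 : i0 ≠ i2 := by simp [hi0, hi2, Fin.ext_iff]
  have h12 : i1 ≠ i2 := by simp [hi1, hi2, Fin.ext_iff]
  set T : Finset (Fin (2*M)) := {i0, i1, i2} with hT
  have hTcard : T.card = 3 := by
    rw [hT, Finset.card_insert_of_notMem (by simp [h01, h02]),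
      Finset.card_insert_of_notMem (by simp [h12]), Finset.card_singleton]
  set F : Finset (Fin (2*M)) := Finset.univ \ T with hF
  have hFcard : (F.card : ℤ) = (2*M : ℤ) - 3 := by
    rw [hF, Finset.card_sdiff_of_subset (Finset.subset_univ T), hTcard]
    simp
    omega
  have sumF : ∀ f : Fin (2*M) → ℤ, (∑ k, f k = 0) →
      ∑ k ∈ F, f k = -(f i0 + f i1 + f i2) := by
    intro f hf
    have hsd := Finset.sum_sdiff (Finset.subset_univ T) (f := f)
    have hTsum : ∑ k ∈ T, f k = f i0 + f i1 + f i2 := by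
      rw [hT, Finset.sum_insert (by simp [h01, h02]),
        Finset.sum_insert (by simp [h12]), Finset.sum_singleton]
      ring
    rw [hf, hTsum] at hsd
    linarith
  have hA2 : ∑ k ∈ F, S i0 k * S i1 k = -(S i0 i2 * S i1 i2) := by
    rw [sumF _ (horth i0 i1 h01)]; simp [hdiag]
  have hA3 : ∑ k ∈ F, S i0 k * S i2 k = -(S i0 i1 * S i2 i1) := by
    rw [sumF _ (horth i0 i2 h02)]; simp [hdiag]
  have hA4 : ∑ k ∈ F, S i1 k * S i2 k = -(S i1 i0 * S i2 i0) := by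
    rw [sumF _ (horth i1 i2 h12)]; simp [hdiag]
  have hprod : ∀ k ∈ F, (1 + S i0 k * S i1 k) * (1 + S i0 k * S i2 k) =
      1 + S i0 k * S i1 k + S i0 k * S i2 k + S i1 k * S i2 k := by
    intro k hk
    have hk0 : i0 ≠ k := by
      intro hc; rw [hF] at hk; simp [← hc, hT] at hk
    rcases hpm i0 k hk0 with h | h <;> rw [h] <;> ring
  have hdvd : (4 : ℤ) ∣ ∑ k ∈ F, (1 + S i0 k * S i1 k) * (1 + S i0 k * S i2 k) := by
    apply Finset.dvd_sum
    intro k hk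
    have hk0 : i0 ≠ k := by intro hc; rw [hF] at hk; simp [← hc, hT] at hk
    have hk1 : i1 ≠ k := by intro hc; rw [hF] at hk; simp [← hc, hT] at hk
    have hk2 : i2 ≠ k := by intro hc; rw [hF] at hk; simp [← hc, hT] at hk
    rcases hpm i0 k hk0 with h0 | h0 <;> rcases hpm i1 k hk1 with h1 | h1 <;>
      rcases hpm i2 k hk2 with h2 | h2 <;> rw [h0, h1, h2] <;> decide
  have hexpand : ∑ k ∈ F, (1 + S i0 k * S i1 k) * (1 + S i0 k * S i2 k) =
      (F.card : ℤ) + (∑ k ∈ F, S i0 k * S i1 k) + (∑ k ∈ F, S i0 k * S i2 k)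
        + ∑ k ∈ F, S i1 k * S i2 k := by
    rw [Finset.sum_congr rfl hprod, Finset.sum_add_distrib, Finset.sum_add_distrib,
      Finset.sum_add_distrib, Finset.sum_const]
    simp
  rw [hexpand, hFcard, hA2, hA3, hA4, hsym i1 i0, hsym i2 i0, hsym i2 i1] at hdvd
  rcases hpm i0 i1 h01 with hu | hu <;> rcases hpm i0 i2 h02 with hv | hv <;>
    rcases hpm i1 i2 h12 with hw | hw <;> rw [hu, hv, hw] at hdvd <;>
    · rcases hdvd with ⟨t, ht⟩
      refine Nat.odd_iff.mpr (by omega)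

/-- Extract a Seidel matrix from an abstract Gram matrix of an `N = 2M` ETF. -/
lemma seidel_of_gram {n : ℕ} (hn : 2 ≤ n) (G : Fin n → Fin n → ℝ)
    (hGsym : ∀ i j, G i j = G j i) (hGdiag : ∀ i, G i i = 1)
    (hGmul : ∀ i j, ∑ k, G i k * G k j = 2 * G i j)
    (c : ℝ) (hc : ∀ i j, i ≠ j → |G i j| = c) :
    ∃ S : Fin n → Fin n → ℤ,
      (∀ i j, S i j = S j i) ∧ (∀ i, S i i = 0) ∧
      (∀ i j, i ≠ j → S i j = 1 ∨ S i j = -1) ∧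
      (∀ i j, ∑ k, S i k * S k j = if i = j then (n : ℤ) - 1 else 0) := by
  set i0 : Fin n := ⟨0, by omega⟩ with hi0
  set i1 : Fin n := ⟨1, by omega⟩ with hi1
  have h01 : i0 ≠ i1 := by simp [hi0, hi1, Fin.ext_iff]
  have hcne : c ≠ 0 := by
    intro hc0
    have hzero : ∀ k, k ≠ i0 → G i0 k * G k i0 = 0 := by
      intro k hk
      have h := hc i0 k (fun h => hk h.symm)
      rw [hc0, abs_eq_zero] at h
      rw [h]; ring
    have hsum := hGmul i0 i0
    rw [Finset.sum_eq_single i0 (fun k _ hk => hzero k hk) (by simp)] at hsum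
    rw [hGdiag i0] at hsum
    norm_num at hsum
  have hcpos : 0 < c := by
    rcases (abs_nonneg (G i0 i1)).lt_or_eq with h | h
    · rw [hc i0 i1 h01] at h; exact h
    · exact absurd (hc i0 i1 h01 ▸ h.symm) hcne
  classical
  refine ⟨fun i j => if i = j then 0 else if 0 < G i j then 1 else -1,
    ?_, fun i => by simp, fun i j hij => by
      simp only [if_neg hij]
      by_cases h : 0 < G i j
      · left; rw [if_pos h]
      · right; rw [if_neg h], ?_⟩
  case refine_1 =>
    intro i j
    by_cases hij : i = j
    · simp [hij]
    · simp only [if_neg hij, if_neg (fun h : j = i => hij h.symm)]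
      rw [hGsym i j]
  set S : Fin n → Fin n → ℤ :=
    fun i j => if i = j then 0 else if 0 < G i j then 1 else -1 with hS
  show ∀ i j, ∑ k, S i k * S k j = if i = j then (n : ℤ) - 1 else 0
  have hGdecomp : ∀ i j, G i j = (if i = j then 1 else 0) + c * ((S i j : ℤ) : ℝ) := by
    intro i j
    by_cases hij : i = j
    · subst hij; simp [hS, hGdiag i]
    · rw [hS]
      simp only [if_neg hij]
      rcases lt_trichotomy 0 (G i j) with h | h | h
      · rw [if_pos h]
        have hcd := hc i j hij
        rw [abs_of_pos h] at hcd
        simp [hcd]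
      · exact absurd (hc i j hij ▸ h ▸ abs_zero) hcne
      · rw [if_neg (not_lt.mpr h.le)]
        have hcd := hc i j hij
        rw [abs_of_neg h] at hcd
        push_cast
        simp only [mul_neg, mul_one]
        linarith
  set A : Fin n → Fin n → ℝ := fun i j => ((S i j : ℤ) : ℝ) with hA
  have hkey : ∀ i j, (∑ k, A i k * A k j) * c^2 = if i = j then 1 else 0 := by
    intro i j
    have hexp := hGmul i j
    have hLHS : ∑ k, G i k * G k j =
        (if i = j then (1:ℝ) else 0) + c * A i j + c * A i j
          + (∑ k, A i k * A k j) * c^2 := by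
      have hterm : ∀ k, G i k * G k j =
          ((if i = k then (1:ℝ) else 0) * (if k = j then (1:ℝ) else 0))
          + (if i = k then (1:ℝ) else 0) * (c * A k j)
          + (c * A i k) * (if k = j then (1:ℝ) else 0)
          + (A i k * A k j) * c^2 := by
        intro k
        rw [hGdecomp i k, hGdecomp k j]
        rw [hA]
        ring
      rw [Finset.sum_congr rfl (fun k _ => hterm k)]
      rw [Finset.sum_add_distrib, Finset.sum_add_distrib, Finset.sum_add_distrib,
        ← Finset.sum_mul]
      congr 2
      · congr 1
        · rw [Finset.sum_eq_single i (fun k _ hk => by simp [Ne.symm hk]) (by simp)]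
          simp
        · rw [Finset.sum_eq_single i (fun k _ hk => by simp [Ne.symm hk]) (by simp)]
          simp
      · rw [Finset.sum_eq_single j (fun k _ hk => by simp [hk]) (by simp)]
        simp
    rw [hLHS, hGdecomp i j] at hexp
    by_cases hij : i = j <;> simp only [hij, if_pos, if_neg, not_false_iff] at hexp ⊢ <;>
      linarith
  -- the diagonal gives c^2 * (n-1) = 1
  have hdiagsum : ∀ i, ∑ k, A i k * A k i = (n : ℝ) - 1 := by
    intro i
    have hterm : ∀ k, A i k * A k i = if k = i then 0 else 1 := by
      intro k
      by_cases hk : k = i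
      · subst hk; simp [hA, hS]
      · rcases show S i k = 1 ∨ S i k = -1 by
            rw [hS]; simp only [if_neg (Ne.symm hk)]
            by_cases h : 0 < G i k
            · left; rw [if_pos h]
            · right; rw [if_neg h] with h | h <;>
        · have hsymm : S k i = S i k := by
            rw [hS]
            simp only [if_neg hk, if_neg (Ne.symm hk)]
            rw [hGsym k i]
          rw [if_neg hk, hA]
          simp only
          rw [hsymm, h]
          norm_num
    rw [Finset.sum_congr rfl (fun k _ => hterm k)]
    have hsplit : (∑ k, if k = i then (0:ℝ) else 1) =
        ∑ k, ((1:ℝ) - if k = i then (1:ℝ) else 0) :=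
      Finset.sum_congr rfl (fun k _ => by split <;> ring)
    rw [hsplit, Finset.sum_sub_distrib, Finset.sum_const,
      Finset.sum_ite_eq' Finset.univ i (fun _ => (1:ℝ))]
    simp [Finset.card_univ]
  have hc2 : ((n:ℝ) - 1) * c^2 = 1 := by
    have h := hkey i0 i0
    rw [hdiagsum i0, if_pos rfl] at h
    exact h
  have hfinal : ∀ i j, ∑ k, A i k * A k j = (if i = j then (1:ℝ) else 0) * ((n:ℝ) - 1) := by
    intro i j
    calc ∑ k, A i k * A k j = (∑ k, A i k * A k j) * (((n:ℝ) - 1) * c^2) := by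
          rw [hc2, mul_one]
      _ = ((∑ k, A i k * A k j) * c^2) * ((n:ℝ) - 1) := by ring
      _ = (if i = j then (1:ℝ) else 0) * ((n:ℝ) - 1) := by rw [hkey]
  intro i j
  have h := hfinal i j
  have hcast : ((∑ k, S i k * S k j : ℤ) : ℝ) = ∑ k, A i k * A k j := by
    push_cast [hA]
    rfl
  rw [← hcast] at h
  by_cases hij : i = j
  · rw [if_pos hij] at h ⊢
    exact_mod_cast (by rw [h]; ring : ((∑ k, S i k * S k j : ℤ) : ℝ) = (n:ℝ) - 1)
  · rw [if_neg hij] at h ⊢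
    exact_mod_cast (by rw [h]; ring : ((∑ k, S i k * S k j : ℤ) : ℝ) = 0)

end RealETFAux

open Matrix BigOperators Finset RealETFAux

/-- A real equiangular tight frame of `N` unit vectors in `ℝ^M`. -/
def IsRealETF (M N : ℕ) (φ : Fin N → EuclideanSpace ℝ (Fin M)) : Prop :=
  (∀ i, ‖φ i‖ = 1) ∧
  (∃ c : ℝ, ∀ i j, i ≠ j → |⟪φ i, φ j⟫_ℝ| = c) ∧
  (∀ x : EuclideanSpace ℝ (Fin M),
    ∑ n, ⟪x, φ n⟫_ℝ • φ n = ((N : ℝ) / (M : ℝ)) • x)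

theorem real_etf_redundancy_two (M : ℕ) (hM : 1 ≤ M)
    (h : ∃ φ : Fin (2 * M) → EuclideanSpace ℝ (Fin M), IsRealETF M (2 * M) φ) :
    Odd M ∧ ∃ a b : ℤ, (2 * M : ℤ) - 1 = a ^ 2 + b ^ 2 := by
  obtain ⟨φ, hnorm, ⟨c, hc⟩, htight⟩ := h
  have htight2 : ∀ x : EuclideanSpace ℝ (Fin M),
      ∑ n, ⟪x, φ n⟫_ℝ • φ n = (2 : ℝ) • x := by
    intro x
    rw [htight x]
    congr 1
    have hMR : ((M : ℕ) : ℝ) ≠ 0 := Nat.cast_ne_zero.mpr (by omega)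
    push_cast
    field_simp
  have hGsym : ∀ i j : Fin (2*M), ⟪φ i, φ j⟫_ℝ = ⟪φ j, φ i⟫_ℝ :=
    fun i j => real_inner_comm _ _
  have hGdiag : ∀ i, ⟪φ i, φ i⟫_ℝ = 1 := by
    intro i
    rw [real_inner_self_eq_norm_sq, hnorm i, one_pow]
  have hGmul : ∀ i j : Fin (2*M), ∑ k, ⟪φ i, φ k⟫_ℝ * ⟪φ k, φ j⟫_ℝ = 2 * ⟪φ i, φ j⟫_ℝ := by
    intro i j
    have h1 : ⟪φ i, ∑ k, ⟪φ j, φ k⟫_ℝ • φ k⟫_ℝ = ⟪φ i, (2:ℝ) • φ j⟫_ℝ := by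
      rw [htight2 (φ j)]
    rw [inner_sum] at h1
    simp_rw [real_inner_smul_right] at h1
    rw [← h1]
    apply Finset.sum_congr rfl
    intro k _
    rw [hGsym k j]
    ring
  obtain ⟨S, hsym, hdiag, hpm, hSS⟩ := RealETFAux.seidel_of_gram (by omega)
    (fun i j => ⟪φ i, φ j⟫_ℝ) hGsym hGdiag hGmul c hc
  have horth : ∀ i j : Fin (2*M), i ≠ j → ∑ k, S i k * S j k = 0 := by
    intro i j hij
    have h := hSS i j
    rw [if_neg hij] at h
    rw [← h]
    exact Finset.sum_congr rfl (fun k _ => by rw [hsym j k])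
  have hModd : Odd M := by
    rcases Nat.lt_or_ge M 2 with h2 | h2
    · have : M = 1 := by omega
      rw [this]; exact ⟨0, rfl⟩
    · exact RealETFAux.odd_of_seidel h2 S hsym hdiag hpm horth
  refine ⟨hModd, ?_⟩
  obtain ⟨j, hj⟩ := hModd
  have h2M : 2*M = 4*j+2 := by omega
  set m : ℕ := 2*M - 1 with hm
  have hm0 : m ≠ 0 := by omega
  have hmZ : (m : ℤ) = (2*M : ℤ) - 1 := by
    rw [hm]; push_cast [Nat.cast_sub (by omega : 1 ≤ 2*M)]; ring
  have hfam : ∃ g : Fin (2*M) → Fin (2*M) → ℚ, IsOrthFam ((m:ℚ)) g := by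
    refine ⟨fun i k => ((S i k : ℤ) : ℚ), fun i j => ?_⟩
    have h := hSS i j
    have hcast : (fun i k => ((S i k : ℤ) : ℚ)) i ⬝ᵥ (fun i k => ((S i k : ℤ) : ℚ)) j
        = ((∑ k, S i k * S k j : ℤ) : ℚ) := by
      rw [dotProduct]
      push_cast
      exact Finset.sum_congr rfl (fun k _ => by rw [hsym j k])
    rw [hcast, h]
    by_cases hij : i = j
    · rw [if_pos hij, if_pos hij]
      have hq : (m:ℚ) = 2*(M:ℚ) - 1 := by
        rw [hm]; push_cast [Nat.cast_sub (by omega : 1 ≤ 2*M)]; ring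
      rw [hq]
      push_cast
      ring
    · rw [if_neg hij, if_neg hij]; norm_num
  rw [h2M] at hfam
  obtain ⟨a, b, cc, d, habcd⟩ := Nat.sum_four_squares m
  have h4 : ((m:ℚ)) = (a:ℚ)^2 + (b:ℚ)^2 + (cc:ℚ)^2 + (d:ℚ)^2 := by
    rw [← habcd]; push_cast; ring
  have hxy := RealETFAux.two_sq_of_fam (by exact_mod_cast hm0) h4 hfam
  obtain ⟨x, y, hab⟩ := RealETFAux.nat_two_sq hm0 hxy
  refine ⟨x, y, ?_⟩
  have := congrArg (fun t : ℕ => (t : ℤ)) hab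
  push_cast at this
  rw [hmZ] at this
  exact this
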